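/- For any nonzero complex numbers λ_1, λ_2, λ_3, there exist complex numbers α_1, α_2, α_3 with exp(−2πi α_j) = λ_j for j = 1, 2, 3, such that none of the six numbers α_1, α_2, α_3, −α_1 − α_2 − 2α_3, α_1 + α_2 + α_3, α_1 + 2α_2 + 2α_3 is a strictly positive integer. (This is the admissibility of every rank one local system for the arrangement of the two lines x = 0, y = 0 and the conic x² − y² + yz = 0 in the projective plane, with the line at infinity z = 0.) -/

import Mathlib

open Complex

private lemma exp_residue_shift (l : ℂ) (h : l ≠ 0) (m : ℤ) :
    Complex.exp (-(2 * Real.pi * Complex.I *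
      (-(Complex.log l / (2 * Real.pi * Complex.I)) + m))) = l := by
  have hπ : (2 * (Real.pi : ℂ) * Complex.I) ≠ 0 := by
    simp [Real.pi_ne_zero, Complex.I_ne_zero, Complex.ofReal_ne_zero]
  have : -(2 * (Real.pi : ℂ) * Complex.I *
      (-(Complex.log l / (2 * Real.pi * Complex.I)) + m)) =
      Complex.log l + (-m : ℤ) * (2 * Real.pi * Complex.I) := by
    push_cast
    field_simp
    ring
  rw [this, Complex.exp_add, Complex.exp_int_mul_two_pi_mul_I, mul_one,
    Complex.exp_log h]

private lemma not_pos_int_of_re_lt_one {w : ℂ} (h : w.re < 1) :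
    ¬ ∃ n : ℤ, 1 ≤ n ∧ w = (n : ℂ) := by
  rintro ⟨n, hn, rfl⟩
  have : ((n : ℂ)).re = (n : ℝ) := by simp
  rw [this] at h
  have : (1 : ℝ) ≤ (n : ℝ) := by exact_mod_cast hn
  linarith

set_option maxHeartbeats 1000000 in
/-- Admissibility of every rank one local system for the arrangement of the two lines
`x = 0`, `y = 0` and the conic `x² − y² + yz = 0` in the projective plane, with line at
infinity `z = 0`: for any nonzero complex numbers `λ₁, λ₂, λ₃` there exist residues
`α₁, α₂, α₃` with `exp(−2πiαⱼ) = λⱼ` such that none of the six numbers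
`α₁, α₂, α₃, −α₁−α₂−2α₃, α₁+α₂+α₃, α₁+2α₂+2α₃` is a strictly positive integer. -/
theorem admissible_residues_two_lines_and_conic'
    (l₁ l₂ l₃ : ℂ) (h₁ : l₁ ≠ 0) (h₂ : l₂ ≠ 0) (h₃ : l₃ ≠ 0) :
    ∃ α₁ α₂ α₃ : ℂ,
      Complex.exp (-(2 * Real.pi * Complex.I * α₁)) = l₁ ∧
      Complex.exp (-(2 * Real.pi * Complex.I * α₂)) = l₂ ∧
      Complex.exp (-(2 * Real.pi * Complex.I * α₃)) = l₃ ∧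
      ∀ z ∈ ({α₁, α₂, α₃, -α₁ - α₂ - 2 * α₃, α₁ + α₂ + α₃,
              α₁ + 2 * α₂ + 2 * α₃} : Set ℂ),
        ¬ ∃ n : ℤ, 1 ≤ n ∧ z = (n : ℂ) := by
  set β₁ : ℂ := -(Complex.log l₁ / (2 * Real.pi * Complex.I)) with hβ₁
  set β₂ : ℂ := -(Complex.log l₂ / (2 * Real.pi * Complex.I)) with hβ₂
  set β₃ : ℂ := -(Complex.log l₃ / (2 * Real.pi * Complex.I)) with hβ₃
  set r₁ : ℝ := β₁.re
  set r₂ : ℝ := β₂.re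
  set r₃ : ℝ := β₃.re
  -- integer shifts
  set a : ℤ := -⌈r₁⌉ with ha
  set c : ℤ := -⌊r₃⌋ with hc
  set x : ℝ := r₁ + a with hx
  set z : ℝ := r₃ + c with hz
  set b : ℤ := ⌊-x - 2 * z - r₂⌋ with hb
  set y : ℝ := r₂ + b with hy
  have hx0 : x ≤ 0 := by
    have := Int.le_ceil r₁
    simp only [hx, ha]
    push_cast
    linarith
  have hx1 : -1 < x := by
    have := Int.ceil_lt_add_one r₁
    simp only [hx, ha]
    push_cast
    linarith
  have hz0 : 0 ≤ z := by
    have := Int.floor_le r₃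
    simp only [hz, hc]
    push_cast
    linarith
  have hz1 : z < 1 := by
    have := Int.lt_floor_add_one r₃
    simp only [hz, hc]
    push_cast
    linarith
  have hyU : y ≤ -x - 2 * z := by
    have := Int.floor_le (-x - 2 * z - r₂)
    simp only [hy, hb]
    linarith
  have hyL : -1 - x - 2 * z < y := by
    have := Int.lt_floor_add_one (-x - 2 * z - r₂)
    simp only [hy, hb]
    linarith
  refine ⟨β₁ + (a : ℂ), β₂ + (b : ℂ), β₃ + (c : ℂ),
    exp_residue_shift l₁ h₁ a, exp_residue_shift l₂ h₂ b, exp_residue_shift l₃ h₃ c, ?_⟩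
  have hre₁ : (β₁ + (a : ℂ)).re = x := by simp [hx]; rfl
  have hre₂ : (β₂ + (b : ℂ)).re = y := by simp [hy]; rfl
  have hre₃ : (β₃ + (c : ℂ)).re = z := by simp [hz]; rfl
  intro w hw
  simp only [Set.mem_insert_iff, Set.mem_singleton_iff] at hw
  rcases hw with rfl | rfl | rfl | rfl | rfl | rfl <;>
    apply not_pos_int_of_re_lt_one <;>
    simp only [Complex.add_re, Complex.sub_re, Complex.neg_re, Complex.mul_re,
      Complex.re_ofNat, Complex.im_ofNat, hre₁, hre₂, hre₃] <;>
    nlinarith [hx0, hx1, hz0, hz1, hyU, hyL]
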